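/- For every positive integer d, every element of GL_d(ℤ) of finite order has order at most 3^{d²}. -/

import Mathlib

open Finset

lemma key {d : ℕ} (p : ℕ) (hp : p.Prime) (A : Matrix (Fin d) (Fin d) ℤ)
    (hA3 : ∀ i j, (3:ℤ) ∣ (A - 1) i j) (hAp : A ^ p = 1) : A = 1 := by
  by_contra hA
  set M : Matrix (Fin d) (Fin d) ℤ := A - 1 with hM
  have hMne : ∃ i j, M i j ≠ 0 := by
    by_contra h
    push_neg at h
    exact hA (sub_eq_zero.mp (by ext i j; exact h i j))
  obtain ⟨i0, j0, hij0⟩ := hMne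
  classical
  set P : ℕ → Prop := fun t => ∀ i j, (3:ℤ)^t ∣ M i j with hPdef
  have hP1 : P 1 := by intro i j; simpa using hA3 i j
  set bound : ℕ := (M i0 j0).natAbs with hbdef
  have hbound : ∀ t, P t → t ≤ bound := by
    intro t ht
    have h1 : (3:ℤ)^t ≤ |M i0 j0| := Int.le_of_dvd (abs_pos.mpr hij0) ((dvd_abs _ _).mpr (ht i0 j0))
    have h2 : (3:ℕ)^t ≤ bound := by
      rw [Int.abs_eq_natAbs] at h1; exact_mod_cast h1
    calc t ≤ 3^t := (Nat.lt_pow_self (by norm_num : 1 < 3)).le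
    _ ≤ bound := h2
  set k : ℕ := Nat.findGreatest P bound with hkdef
  have hk1 : 1 ≤ k := Nat.le_findGreatest (hbound 1 hP1) hP1
  have hPk : P k := Nat.findGreatest_spec (hbound 1 hP1) hP1
  have hnPk1 : ¬ P (k+1) := fun h =>
    Nat.findGreatest_is_greatest (Nat.lt_succ_self k) (hbound _ h) h
  -- define B
  set B : Matrix (Fin d) (Fin d) ℤ := Matrix.of fun i j => M i j / 3^k with hBdef
  have hMB : ∀ i j, M i j = 3^k * B i j := fun i j => (Int.mul_ediv_cancel' (hPk i j)).symm
  have hB3 : ¬ ∀ i j, (3:ℤ) ∣ B i j := by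
    intro h
    apply hnPk1
    intro i j
    rw [hMB i j, pow_succ]
    exact mul_dvd_mul_left _ (h i j)
  -- A = 1 + 3^k • B
  have hA1 : A = (3:ℤ)^k • B + 1 := by
    ext i j
    have := hMB i j
    simp only [hM, Matrix.sub_apply] at this
    simp only [Matrix.add_apply, Matrix.smul_apply, smul_eq_mul]
    linarith
  -- binomial expansion
  have hbin : A ^ p = ∑ m ∈ range (p+1), (((p.choose m : ℤ)) * 3^(k*m)) • B ^ m := by
    rw [hA1, (Commute.one_right ((3:ℤ)^k • B)).add_pow p]
    refine Finset.sum_congr rfl fun m _ => ?_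
    rw [one_pow, mul_one, smul_pow, ← pow_mul, smul_mul_assoc, ← nsmul_eq_mul',
      ← Nat.cast_smul_eq_nsmul ℤ, smul_smul, mul_comm]
  rw [hbin] at hAp
  have hentry : ∀ i j, ∑ m ∈ range (p+1), ((p.choose m : ℤ) * 3^(k*m)) * (B ^ m) i j
      = (1 : Matrix (Fin d) (Fin d) ℤ) i j := by
    intro i j
    have := congrFun (congrFun hAp i) j
    rw [Matrix.sum_apply] at this
    simp only [Matrix.smul_apply, smul_eq_mul] at this
    exact this
  obtain ⟨p', rfl⟩ : ∃ p', p = p' + 1 := ⟨p - 1, (Nat.succ_pred_eq_of_pos hp.pos).symm⟩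
  apply hB3
  intro i j
  have h3 := hentry i j
  rw [Finset.sum_range_succ'] at h3
  simp only [pow_zero, Nat.choose_zero_right, Nat.cast_one, mul_zero, one_mul, mul_one,
    Matrix.one_apply] at h3
  -- h3 : ∑ m ∈ range (p'+1), f (m+1) + (if i = j then 1 else 0) = if i = j then 1 else 0
  have h4 : ∑ m ∈ range (p'+1), ((((p'+1).choose (m+1) : ℤ)) * 3^(k*(m+1))) * (B ^ (m+1)) i j = 0 := by
    split_ifs at h3 <;> linarith
  rw [Finset.sum_range_succ'] at h4
  simp only [zero_add, Nat.choose_one_right, mul_one, pow_one] at h4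
  -- h4 : ∑ m ∈ range p', c(m+2) * B^(m+2) ij + (p'+1) * 3^k * B i j = 0
  have hprime3 : Prime (3:ℤ) := Int.prime_three
  by_cases hp3 : p' + 1 = 3
  · -- p = 3 case
    have hp2 : p' = 2 := by omega
    subst hp2
    have hdvd : (3:ℤ)^(k+2) ∣ ∑ m ∈ range 2, (((2+1).choose (m+1+1) : ℤ) * 3^(k*(m+1+1))) * (B ^ (m+1+1)) i j := by
      refine Finset.dvd_sum fun m hm => ?_
      rw [Finset.mem_range] at hm
      interval_cases m
      · refine dvd_mul_of_dvd_left ?_ _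
        norm_num
        calc (3:ℤ)^(k+2) ∣ (3:ℤ)^(2*k+1) := pow_dvd_pow 3 (by omega)
        _ = 3 * 3^(k*2) := by ring
      · refine dvd_mul_of_dvd_left (dvd_mul_of_dvd_right ?_ _) _
        exact pow_dvd_pow 3 (by omega)
    have h5 : (3:ℤ)^(k+2) ∣ ((2:ℤ)+1) * 3^k * B i j := by
      have heq : ((2:ℤ)+1) * 3^k * B i j
          = -∑ m ∈ range 2, (((2+1).choose (m+1+1) : ℤ) * 3^(k*(m+1+1))) * (B ^ (m+1+1)) i j := by
        push_cast at h4 ⊢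
        linarith
      rw [heq]
      exact dvd_neg.mpr hdvd
    have h6 : (3:ℤ)^(k+1) * 3 ∣ 3^(k+1) * B i j := by
      calc (3:ℤ)^(k+1) * 3 = 3^(k+2) := by ring
      _ ∣ ((2:ℤ)+1) * 3^k * B i j := h5
      _ = 3^(k+1) * B i j := by ring
    exact (mul_dvd_mul_iff_left (pow_ne_zero (k+1) (by norm_num : (3:ℤ) ≠ 0))).mp h6
  · -- p ≠ 3 case
    have hdvd : (3:ℤ)^(k+1) ∣ ∑ m ∈ range p', (((p'+1).choose (m+1+1) : ℤ) * 3^(k*(m+1+1))) * (B ^ (m+1+1)) i j := by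
      refine Finset.dvd_sum fun m hm => ?_
      refine dvd_mul_of_dvd_left (dvd_mul_of_dvd_right ?_ _) _
      exact pow_dvd_pow 3 (by nlinarith [hk1])
    have h5 : (3:ℤ)^(k+1) ∣ ((p':ℤ)+1) * 3^k * B i j := by
      have heq : ((p':ℤ)+1) * 3^k * B i j
          = -∑ m ∈ range p', (((p'+1).choose (m+1+1) : ℤ) * 3^(k*(m+1+1))) * (B ^ (m+1+1)) i j := by
        push_cast at h4 ⊢
        linarith
      rw [heq]
      exact dvd_neg.mpr hdvd
    have h6 : (3:ℤ)^k * 3 ∣ 3^k * (((p':ℤ)+1) * B i j) := by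
      calc (3:ℤ)^k * 3 = 3^(k+1) := by ring
      _ ∣ ((p':ℤ)+1) * 3^k * B i j := h5
      _ = 3^k * (((p':ℤ)+1) * B i j) := by ring
    have h7 : (3:ℤ) ∣ ((p':ℤ)+1) * B i j :=
      (mul_dvd_mul_iff_left (pow_ne_zero k (by norm_num : (3:ℤ) ≠ 0))).mp h6
    rcases hprime3.dvd_mul.mp h7 with h8 | h8
    · exfalso
      have : (3:ℕ) ∣ p' + 1 := by exact_mod_cast h8
      exact hp3 ((Nat.prime_dvd_prime_iff_eq Nat.prime_three hp).mp this).symm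
    · exact h8

lemma ker_torsionfree {d : ℕ} (g : GL (Fin d) ℤ) (hg : IsOfFinOrder g)
    (hker : ∀ i j, (3:ℤ) ∣ ((g : Matrix (Fin d) (Fin d) ℤ) - 1) i j) : g = 1 := by
  by_contra hne
  have hord : 1 < orderOf g := by
    have hpos := hg.orderOf_pos
    have : orderOf g ≠ 1 := fun e => hne (orderOf_eq_one_iff.mp e)
    omega
  set m := orderOf g with hm
  set p := m.minFac with hp
  have hpp : p.Prime := Nat.minFac_prime (by omega)
  set h' := g ^ (m / p) with hh
  have hdvd : p ∣ m := Nat.minFac_dvd m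
  have h'pow : h' ^ p = 1 := by
    rw [hh, ← pow_mul, Nat.div_mul_cancel hdvd, hm, pow_orderOf_eq_one]
  have h'ne : h' ≠ 1 := by
    intro h1
    have := orderOf_dvd_of_pow_eq_one (hh ▸ h1 : g ^ (m / p) = 1)
    have hmp : m / p < m := Nat.div_lt_self (by omega) hpp.one_lt
    have hpos : 0 < m / p := Nat.div_pos (Nat.minFac_le (by omega)) hpp.pos
    have := Nat.le_of_dvd hpos this
    omega
  -- matrix of h' is ≡ 1 mod 3
  have hker' : ∀ i j, (3:ℤ) ∣ ((h' : Matrix (Fin d) (Fin d) ℤ) - 1) i j := by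
    -- reduction mod 3 of h' is 1 because reduction of g is 1
    have hredg : (g : Matrix (Fin d) (Fin d) ℤ).map (Int.cast : ℤ → ZMod 3) = 1 := by
      ext i j
      have := hker i j
      have h0 : (((g : Matrix (Fin d) (Fin d) ℤ) - 1) i j : ℤ) = (g : Matrix (Fin d) (Fin d) ℤ) i j - (1 : Matrix (Fin d) (Fin d) ℤ) i j := by
        simp [Matrix.sub_apply]
      rw [h0] at this
      have h1 : (((g : Matrix (Fin d) (Fin d) ℤ) i j - (1 : Matrix (Fin d) (Fin d) ℤ) i j : ℤ) : ZMod 3) = 0 :=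
        (ZMod.intCast_zmod_eq_zero_iff_dvd _ 3).mpr (by exact_mod_cast this)
      push_cast at h1
      simp only [Matrix.map_apply, Matrix.one_apply]
      rw [sub_eq_zero] at h1
      rw [h1]
      simp [Matrix.one_apply]
    intro i j
    have hredh : ((h' : Matrix (Fin d) (Fin d) ℤ)).map (Int.cast : ℤ → ZMod 3) = 1 := by
      have hcoe : (h' : Matrix (Fin d) (Fin d) ℤ) = (g : Matrix (Fin d) (Fin d) ℤ) ^ (m / p) := by
        rw [hh]; push_cast; rfl
      calc ((h' : Matrix (Fin d) (Fin d) ℤ)).map (Int.cast : ℤ → ZMod 3)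
          = (RingHom.mapMatrix (Int.castRingHom (ZMod 3))) ((g : Matrix (Fin d) (Fin d) ℤ) ^ (m/p)) := by
            rw [hcoe]; rfl
        _ = ((RingHom.mapMatrix (Int.castRingHom (ZMod 3))) (g : Matrix (Fin d) (Fin d) ℤ)) ^ (m/p) := by
            rw [map_pow]
        _ = 1 := by
            have : (RingHom.mapMatrix (Int.castRingHom (ZMod 3))) (g : Matrix (Fin d) (Fin d) ℤ)
                = (g : Matrix (Fin d) (Fin d) ℤ).map (Int.cast : ℤ → ZMod 3) := rfl
            rw [this, hredg, one_pow]
    have := congrFun (congrFun hredh i) j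
    simp only [Matrix.map_apply] at this
    have hz : (((((h' : Matrix (Fin d) (Fin d) ℤ) - 1) i j : ℤ)) : ZMod 3) = 0 := by
      have h2 : (((h' : Matrix (Fin d) (Fin d) ℤ) - 1) i j : ℤ) = (h' : Matrix (Fin d) (Fin d) ℤ) i j - (1 : Matrix (Fin d) (Fin d) ℤ) i j := by
        simp [Matrix.sub_apply]
      rw [h2]
      push_cast
      rw [this]
      simp [Matrix.one_apply]
    exact_mod_cast (ZMod.intCast_zmod_eq_zero_iff_dvd _ 3).mp hz
  have hmat : (h' : Matrix (Fin d) (Fin d) ℤ) = 1 := by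
    apply key p hpp _ hker'
    rw [← Units.val_pow_eq_pow_val, h'pow, Units.val_one]
  exact h'ne (Units.ext hmat)

/-- Every element of finite order in `GL_d(ℤ)` has order at most `3 ^ (d²)`. -/
theorem stmt_18 (d : ℕ) (hd : 0 < d) (g : Matrix.GeneralLinearGroup (Fin d) ℤ)
    (hg : IsOfFinOrder g) :
    orderOf g ≤ 3 ^ (d ^ 2) := by
  set φ : GL (Fin d) ℤ →* GL (Fin d) (ZMod 3) :=
    Matrix.GeneralLinearGroup.map (Int.castRingHom (ZMod 3)) with hφ
  set h := φ g with hh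
  have hhord : 0 < orderOf h := orderOf_pos h
  -- g ^ orderOf h = 1
  have hker : g ^ orderOf h = 1 := by
    apply ker_torsionfree _ (hg.pow)
    intro i j
    have hφpow : φ (g ^ orderOf h) = 1 := by
      rw [map_pow, ← hh, pow_orderOf_eq_one]
    -- entries
    have hmap : ((g ^ orderOf h : GL (Fin d) ℤ) : Matrix (Fin d) (Fin d) ℤ).map
        (Int.cast : ℤ → ZMod 3) = 1 := by
      have := congrArg (Units.val) hφpow
      exact this
    have := congrFun (congrFun hmap i) j
    simp only [Matrix.map_apply] at this
    have hz : (((((g ^ orderOf h : GL (Fin d) ℤ) : Matrix (Fin d) (Fin d) ℤ) - 1) i j : ℤ) : ZMod 3) = 0 := by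
      have h2 : ((((g ^ orderOf h : GL (Fin d) ℤ) : Matrix (Fin d) (Fin d) ℤ) - 1) i j : ℤ)
          = ((g ^ orderOf h : GL (Fin d) ℤ) : Matrix (Fin d) (Fin d) ℤ) i j - (1 : Matrix (Fin d) (Fin d) ℤ) i j := by
        simp [Matrix.sub_apply]
      rw [h2]
      push_cast at this ⊢
      rw [this]
      simp [Matrix.one_apply]
    exact_mod_cast (ZMod.intCast_zmod_eq_zero_iff_dvd _ 3).mp hz
  have h1 : orderOf g ∣ orderOf h := orderOf_dvd_of_pow_eq_one hker
  have h2 : orderOf h ∣ Nat.card (GL (Fin d) (ZMod 3)) := orderOf_dvd_natCard h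
  have h3 : Nat.card (GL (Fin d) (ZMod 3)) ≤ Nat.card (Matrix (Fin d) (Fin d) (ZMod 3)) :=
    Nat.card_le_card_of_injective (fun u : GL (Fin d) (ZMod 3) => (u : Matrix (Fin d) (Fin d) (ZMod 3))) (fun a b hab => Units.ext hab)
  have h4 : Nat.card (Matrix (Fin d) (Fin d) (ZMod 3)) = 3 ^ (d ^ 2) := by
    rw [Nat.card_eq_fintype_card]
    rw [show Fintype.card (Matrix (Fin d) (Fin d) (ZMod 3)) = Fintype.card (Fin d → Fin d → ZMod 3) from rfl]
    simp [pow_mul, pow_two]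
  calc orderOf g ≤ orderOf h := Nat.le_of_dvd hhord h1
    _ ≤ Nat.card (GL (Fin d) (ZMod 3)) :=
        Nat.le_of_dvd (Nat.card_pos) h2
    _ ≤ 3 ^ (d ^ 2) := h4 ▸ h3
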